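/- Sufficient number of tosses: fix a real p with 0 < p ≤ 1/2, an integer m ≥ 1, and a real ε with 0 < ε < 1, and let x_N be the probability that N independent p-biased coin tosses contain a run of at least m consecutive heads. If m divides N and N ≥ 2.4·m·log(1/ε)/p^m, then x_N ≥ 1 − ε. -/

import Mathlib

open MeasureTheory

/-- The Bernoulli measure on `Bool` with parameter `p`: it assigns probability
`p` to `{true}` and `1 − p` to `{false}` (for `0 ≤ p ≤ 1`). -/
noncomputable def bernoulliMeasure (p : ℝ) : Measure Bool :=
  ENNReal.ofReal p • Measure.dirac true + ENNReal.ofReal (1 - p) • Measure.dirac false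

instance (p : ℝ) : IsFiniteMeasure (bernoulliMeasure p) := by
  constructor
  simp only [bernoulliMeasure, Measure.add_apply, Measure.smul_apply, smul_eq_mul,
    measure_univ, mul_one]
  exact ENNReal.add_lt_top.mpr ⟨ENNReal.ofReal_lt_top, ENNReal.ofReal_lt_top⟩

/-- The event that `N` coin tosses contain a run of at least `m` consecutive
heads (`true`s). -/
def runEvent (N m : ℕ) : Set (Fin N → Bool) :=
  {f | ∃ i : ℕ, ∃ h : i + m ≤ N, ∀ k : ℕ, ∀ _ : k < m, f ⟨i + k, by omega⟩ = true}

/-- `x_N(p, m)`: the probability, under the `N`-fold product of the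
Bernoulli(`p`) measure on `Bool`, that `N` independent `p`-biased coin tosses
contain a run of at least `m` consecutive heads. -/
noncomputable def coinRunProb (p : ℝ) (m N : ℕ) : ℝ :=
  ((Measure.pi fun _ : Fin N => bernoulliMeasure p) (runEvent N m)).toReal

lemma bern_prob {p : ℝ} (hp0 : 0 ≤ p) (hp1 : p ≤ 1) :
    IsProbabilityMeasure (bernoulliMeasure p) := by
  constructor
  simp only [bernoulliMeasure, Measure.add_apply, Measure.smul_apply, smul_eq_mul,
    measure_univ, mul_one]
  rw [← ENNReal.ofReal_add hp0 (by linarith), add_sub_cancel, ENNReal.ofReal_one]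

lemma bern_true {p : ℝ} : bernoulliMeasure p {true} = ENNReal.ofReal p := by
  simp [bernoulliMeasure]

lemma mul_bound {j n k m : ℕ} (hj : j < n) (hk : k < m) : j * m + k < n * m := by
  have h1 : j * m + k < (j + 1) * m := by rw [Nat.succ_mul]; omega
  exact lt_of_lt_of_le h1 (Nat.mul_le_mul_right m hj)

def blockMiss (m n : ℕ) : Set (Fin (n * m) → Bool) :=
  {f | ∀ j : ℕ, ∀ hj : j < n, ∃ k : ℕ, ∃ hk : k < m, f ⟨j * m + k, mul_bound hj hk⟩ = false}

lemma blockMiss_measurable (m n : ℕ) : MeasurableSet (blockMiss m n) := by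
  have : blockMiss m n = ⋂ j : ℕ, ⋂ hj : j < n, ⋃ k : ℕ, ⋃ hk : k < m,
      {f : Fin (n * m) → Bool | f ⟨j * m + k, mul_bound hj hk⟩ = false} := by
    ext f; simp [blockMiss]
  rw [this]
  refine MeasurableSet.iInter fun j => MeasurableSet.iInter fun hj =>
    MeasurableSet.iUnion fun k => MeasurableSet.iUnion fun hk => ?_
  exact measurable_pi_apply (X := fun _ : Fin (n * m) => Bool) ⟨j * m + k, mul_bound hj hk⟩ (measurableSet_singleton false)

lemma allTrue_measure {p : ℝ} (hp0 : 0 ≤ p) (m : ℕ) :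
    (Measure.pi fun _ : Fin m => bernoulliMeasure p) {g | ∀ a : Fin m, g a = true}
      = ENNReal.ofReal p ^ m := by
  have h : {g : Fin m → Bool | ∀ a : Fin m, g a = true}
      = Set.pi Set.univ (fun _ : Fin m => ({true} : Set Bool)) := by
    ext g; simp [Set.mem_pi]
  rw [h, Measure.pi_pi]
  simp [bern_true]

lemma missOne_measure {p : ℝ} (hp0 : 0 ≤ p) (hp1 : p ≤ 1) (m : ℕ) :
    (Measure.pi fun _ : Fin m => bernoulliMeasure p) {g | ∃ a : Fin m, g a = false}
      = ENNReal.ofReal (1 - p ^ m) := by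
  haveI := bern_prob hp0 hp1
  have hc : {g : Fin m → Bool | ∃ a : Fin m, g a = false}
      = {g : Fin m → Bool | ∀ a : Fin m, g a = true}ᶜ := by
    ext g; simp
  have hmeas : MeasurableSet {g : Fin m → Bool | ∀ a : Fin m, g a = true} := by
    have h : {g : Fin m → Bool | ∀ a : Fin m, g a = true}
        = Set.pi Set.univ (fun _ : Fin m => ({true} : Set Bool)) := by
      ext g; simp [Set.mem_pi]
    rw [h]
    exact MeasurableSet.pi Set.countable_univ fun _ _ => measurableSet_singleton true
  rw [hc, prob_compl_eq_one_sub hmeas, allTrue_measure hp0,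
    ENNReal.ofReal_sub _ (pow_nonneg hp0 m), ENNReal.ofReal_one, ENNReal.ofReal_pow hp0]

lemma key_bound {p : ℝ} (hp0 : 0 ≤ p) (hp1 : p ≤ 1) (m : ℕ) : ∀ n : ℕ,
    (Measure.pi fun _ : Fin (n * m) => bernoulliMeasure p) (blockMiss m n)
      ≤ ENNReal.ofReal (1 - p ^ m) ^ n := by
  haveI := bern_prob hp0 hp1
  intro n
  induction n with
  | zero =>
      have : blockMiss m 0 = Set.univ := by
        ext f; simp [blockMiss]
      rw [this]
      simp
  | succ n ih =>
      set e : Fin m ⊕ Fin (n * m) ≃ Fin ((n + 1) * m) :=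
        finSumFinEquiv.trans (finCongr (by ring)) with he
      set ψ := MeasurableEquiv.sumPiEquivProdPi (fun _ : Fin m ⊕ Fin (n * m) => Bool) with hψ
      set φ := MeasurableEquiv.piCongrLeft (fun _ : Fin ((n + 1) * m) => Bool) e with hφ
      have hmp : MeasurePreserving (φ ∘ ψ.symm)
          (((Measure.pi fun _ : Fin m => bernoulliMeasure p)).prod
            (Measure.pi fun _ : Fin (n * m) => bernoulliMeasure p))
          (Measure.pi fun _ : Fin ((n + 1) * m) => bernoulliMeasure p) :=
        (measurePreserving_piCongrLeft (fun _ : Fin ((n+1)*m) => bernoulliMeasure p) e).comp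
          (measurePreserving_sumPiEquivProdPi_symm (fun _ : Fin m ⊕ Fin (n * m) => bernoulliMeasure p))
      have hval : ∀ x : (Fin m → Bool) × (Fin (n * m) → Bool), ∀ i : Fin m ⊕ Fin (n * m),
          (φ ∘ ψ.symm) x (e i) = ψ.symm x i := by
        intro x i
        exact Equiv.piCongrLeft_apply_apply (fun _ => Bool) e (ψ.symm x) i
      have hsub : (φ ∘ ψ.symm) ⁻¹' blockMiss m (n + 1) ⊆
          {g : Fin m → Bool | ∃ a : Fin m, g a = false} ×ˢ blockMiss m n := by
        rintro ⟨g, h⟩ hx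
        constructor
        · obtain ⟨k, hk, hf⟩ := hx 0 (Nat.succ_pos n)
          refine ⟨⟨k, hk⟩, ?_⟩
          have hidx : (⟨0 * m + k, mul_bound (Nat.succ_pos n) hk⟩ : Fin ((n + 1) * m))
              = e (Sum.inl ⟨k, hk⟩) := by
            apply Fin.ext
            simp [he]
          rw [hidx] at hf
          have := hval (g, h) (Sum.inl ⟨k, hk⟩)
          rw [this] at hf
          exact hf
        · intro j hj
          obtain ⟨k, hk, hf⟩ := hx (j + 1) (by omega)
          refine ⟨k, hk, ?_⟩
          have hidx : (⟨(j + 1) * m + k, mul_bound (by omega : j + 1 < n + 1) hk⟩ :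
              Fin ((n + 1) * m)) = e (Sum.inr ⟨j * m + k, mul_bound hj hk⟩) := by
            apply Fin.ext
            simp [he, Nat.succ_mul]
            omega
          rw [hidx] at hf
          have := hval (g, h) (Sum.inr ⟨j * m + k, mul_bound hj hk⟩)
          rw [this] at hf
          exact hf
      calc (Measure.pi fun _ : Fin ((n + 1) * m) => bernoulliMeasure p) (blockMiss m (n + 1))
          = (((Measure.pi fun _ : Fin m => bernoulliMeasure p)).prod
              (Measure.pi fun _ : Fin (n * m) => bernoulliMeasure p))
              ((φ ∘ ψ.symm) ⁻¹' blockMiss m (n + 1)) :=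
            (hmp.measure_preimage (blockMiss_measurable m (n + 1)).nullMeasurableSet).symm
        _ ≤ (((Measure.pi fun _ : Fin m => bernoulliMeasure p)).prod
              (Measure.pi fun _ : Fin (n * m) => bernoulliMeasure p))
              ({g : Fin m → Bool | ∃ a : Fin m, g a = false} ×ˢ blockMiss m n) :=
            measure_mono hsub
        _ = ENNReal.ofReal (1 - p ^ m)
              * (Measure.pi fun _ : Fin (n * m) => bernoulliMeasure p) (blockMiss m n) := by
            rw [Measure.prod_prod, missOne_measure hp0 hp1]
        _ ≤ ENNReal.ofReal (1 - p ^ m) * ENNReal.ofReal (1 - p ^ m) ^ n :=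
            mul_le_mul_right ih _
        _ = ENNReal.ofReal (1 - p ^ m) ^ (n + 1) := (pow_succ' _ _).symm

lemma runEvent_measurable (N m : ℕ) : MeasurableSet (runEvent N m) := by
  have h : runEvent N m = ⋃ i : ℕ, ⋃ h : i + m ≤ N, ⋂ k : ℕ, ⋂ hk : k < m,
      {f : Fin N → Bool | f ⟨i + k, by omega⟩ = true} := by
    ext f; simp [runEvent]
  rw [h]
  refine MeasurableSet.iUnion fun i => MeasurableSet.iUnion fun hi =>
    MeasurableSet.iInter fun k => MeasurableSet.iInter fun hk => ?_
  exact measurable_pi_apply (X := fun _ : Fin N => Bool) ⟨i + k, by omega⟩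
    (measurableSet_singleton true)

/-- Sufficient number of tosses: if `0 < p ≤ 1/2`, `m ∣ N`, and
`N ≥ 2.4·m·log(1/ε)/p^m`, then `x_N ≥ 1 − ε`. -/
theorem coinRunProb_sufficient_tosses (p : ℝ) (hp0 : 0 < p) (hp : p ≤ 1 / 2)
    (m : ℕ) (hm : 1 ≤ m) (ε : ℝ) (hε0 : 0 < ε) (hε1 : ε < 1) (N : ℕ) (hdvd : m ∣ N)
    (hN : 2.4 * (m : ℝ) * Real.log (1 / ε) / p ^ m ≤ (N : ℝ)) :
    1 - ε ≤ coinRunProb p m N := by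
  obtain ⟨n, rfl⟩ : ∃ n, N = n * m := ⟨N / m, (Nat.div_mul_cancel hdvd).symm⟩
  have hp1 : p ≤ 1 := by linarith
  have hpm0 : 0 < p ^ m := pow_pos hp0 m
  have hpm1 : p ^ m ≤ 1 := pow_le_one₀ hp0.le hp1
  set L := Real.log (1 / ε) with hLdef
  have hL : 0 < L := Real.log_pos (by rw [lt_div_iff₀ hε0]; linarith)
  have hm1 : (1 : ℝ) ≤ (m : ℝ) := by exact_mod_cast hm
  have hNm : 2.4 * (m : ℝ) * L ≤ (n : ℝ) * (m : ℝ) * p ^ m := by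
    have := (div_le_iff₀ hpm0).mp hN
    push_cast at this
    linarith
  have h1 : L ≤ (n : ℝ) * p ^ m := by nlinarith [hL.le, hm1, hpm0.le]
  have hbound : (1 - p ^ m) ^ n ≤ ε := by
    calc (1 - p ^ m) ^ n ≤ Real.exp (-p ^ m) ^ n := by
          refine pow_le_pow_left₀ (by linarith) ?_ n
          have := Real.add_one_le_exp (-p ^ m)
          linarith
      _ = Real.exp (-((n : ℝ) * p ^ m)) := by
          rw [← Real.exp_nat_mul]; ring_nf
      _ ≤ Real.exp (Real.log ε) := by
          apply Real.exp_le_exp.mpr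
          have hlogeq : L = -Real.log ε := by rw [hLdef, one_div, Real.log_inv]
          linarith
      _ = ε := Real.exp_log hε0
  haveI := bern_prob hp0.le hp1
  set μ := Measure.pi fun _ : Fin (n * m) => bernoulliMeasure p with hμ
  haveI : IsProbabilityMeasure μ := by rw [hμ]; infer_instance
  have hcompl : (runEvent (n * m) m)ᶜ ⊆ blockMiss m n := by
    intro f hf j hj
    by_contra hcon
    push_neg at hcon
    simp only [Bool.not_eq_false] at hcon
    exact hf ⟨j * m, by calc j * m + m = (j+1) * m := (Nat.succ_mul j m).symm
      _ ≤ n * m := Nat.mul_le_mul_right m hj, fun k hk => hcon k hk⟩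
  have hμc : μ (runEvent (n * m) m)ᶜ ≤ ENNReal.ofReal ε := by
    calc μ (runEvent (n * m) m)ᶜ ≤ μ (blockMiss m n) := measure_mono hcompl
      _ ≤ ENNReal.ofReal (1 - p ^ m) ^ n := key_bound hp0.le hp1 m n
      _ = ENNReal.ofReal ((1 - p ^ m) ^ n) := (ENNReal.ofReal_pow (by linarith) n).symm
      _ ≤ ENNReal.ofReal ε := ENNReal.ofReal_le_ofReal hbound
  have hEeq : μ (runEvent (n * m) m) = 1 - μ (runEvent (n * m) m)ᶜ := by
    have h := prob_compl_eq_one_sub (μ := μ) (runEvent_measurable (n * m) m).compl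
    rwa [compl_compl] at h
  have htoR : (μ (runEvent (n * m) m)ᶜ).toReal ≤ ε := by
    have h := ENNReal.toReal_mono ENNReal.ofReal_ne_top hμc
    rwa [ENNReal.toReal_ofReal hε0.le] at h
  have hle1 : μ (runEvent (n * m) m)ᶜ ≤ 1 := prob_le_one
  rw [coinRunProb]
  rw [show (Measure.pi fun _ : Fin (n * m) => bernoulliMeasure p) = μ from rfl, hEeq,
    ENNReal.toReal_sub_of_le hle1 ENNReal.one_ne_top, ENNReal.toReal_one]
  linarith
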